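/- Let E be a finite-dimensional real normed vector space, n ∈ ℕ, and let x : ℝⁿ → E and α : ℝⁿ → (E →L[ℝ] ℝ) be twice continuously differentiable maps satisfying, for all u ∈ ℝⁿ and w ∈ ℝⁿ: α(u)(x(u)) = 1, α(u)(Dx(u)(w)) = 0, and (Dα(u)(w))(x(u)) = 0, where D denotes the Fréchet derivative. Then for all u, w₁, w₂ ∈ ℝⁿ: −(Dα(u)(w₁))(Dx(u)(w₂)) = α(u)(D²x(u)(w₁,w₂)) = (D²α(u)(w₁,w₂))(x(u)), where D² denotes the second (bilinear) Fréchet derivative; in particular the bilinear form g_u(w₁,w₂) := −(Dα(u)(w₁))(Dx(u)(w₂)) is symmetric in w₁ and w₂. -/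

import Mathlib

theorem stmt4 {E : Type*} [NormedAddCommGroup E] [NormedSpace ℝ E] [FiniteDimensional ℝ E]
    (n : ℕ) (x : (Fin n → ℝ) → E) (α : (Fin n → ℝ) → (E →L[ℝ] ℝ))
    (hx : ContDiff ℝ 2 x) (hα : ContDiff ℝ 2 α)
    (hdual : ∀ u, α u (x u) = 1)
    (htanS : ∀ u w, α u (fderiv ℝ x u w) = 0)
    (htanS' : ∀ u w, (fderiv ℝ α u w) (x u) = 0) :
    ∀ u w₁ w₂ : Fin n → ℝ,
      -((fderiv ℝ α u w₁) (fderiv ℝ x u w₂)) = α u ((fderiv ℝ (fderiv ℝ x) u w₁) w₂) ∧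
      α u ((fderiv ℝ (fderiv ℝ x) u w₁) w₂) = ((fderiv ℝ (fderiv ℝ α) u w₁) w₂) (x u) ∧
      -((fderiv ℝ α u w₁) (fderiv ℝ x u w₂)) = -((fderiv ℝ α u w₂) (fderiv ℝ x u w₁)) := by
  have hx1 : ContDiff ℝ 1 (fderiv ℝ x) := hx.fderiv_right (le_refl _)
  have hα1 : ContDiff ℝ 1 (fderiv ℝ α) := hα.fderiv_right (le_refl _)
  have hxd : Differentiable ℝ x := hx.differentiable (by norm_num)
  have hαd : Differentiable ℝ α := hα.differentiable (by norm_num)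
  have hxd1 : Differentiable ℝ (fderiv ℝ x) := hx1.differentiable one_ne_zero
  have hαd1 : Differentiable ℝ (fderiv ℝ α) := hα1.differentiable one_ne_zero
  -- claim1 : Dα u w₁ (Dx u w₂) + α u (D²x u w₁ w₂) = 0
  have claim1 : ∀ u w₁ w₂ : Fin n → ℝ,
      (fderiv ℝ α u w₁) (fderiv ℝ x u w₂) + α u ((fderiv ℝ (fderiv ℝ x) u w₁) w₂) = 0 := by
    intro u w₁ w₂
    have hc : HasFDerivAt (fun y => (fderiv ℝ x y) w₂)
        (((fderiv ℝ x u).comp (0 : (Fin n → ℝ) →L[ℝ] (Fin n → ℝ)))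
          + (fderiv ℝ (fderiv ℝ x) u).flip w₂) u :=
      ((hxd1 u).hasFDerivAt).clm_apply (hasFDerivAt_const w₂ u)
    have hF : HasFDerivAt (fun y => α y ((fderiv ℝ x y) w₂))
        ((α u).comp ((((fderiv ℝ x u).comp (0 : (Fin n → ℝ) →L[ℝ] (Fin n → ℝ)))
          + (fderiv ℝ (fderiv ℝ x) u).flip w₂))
          + (fderiv ℝ α u).flip ((fderiv ℝ x u) w₂)) u :=
      ((hαd u).hasFDerivAt).clm_apply hc
    have hF0 : HasFDerivAt (fun y => α y ((fderiv ℝ x y) w₂)) (0 : (Fin n → ℝ) →L[ℝ] ℝ) u := by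
      have : (fun y => α y ((fderiv ℝ x y) w₂)) = fun _ => (0 : ℝ) := by
        funext y; exact htanS y w₂
      rw [this]; exact hasFDerivAt_const 0 u
    have := hF.unique hF0
    have h := congrFun (congrArg DFunLike.coe this) w₁
    simp at h
    linarith
  -- claim2 : D²α u w₁ w₂ (x u) + Dα u w₂ (Dx u w₁) = 0
  have claim2 : ∀ u w₁ w₂ : Fin n → ℝ,
      ((fderiv ℝ (fderiv ℝ α) u w₁) w₂) (x u) + (fderiv ℝ α u w₂) (fderiv ℝ x u w₁) = 0 := by
    intro u w₁ w₂
    have hc : HasFDerivAt (fun y => (fderiv ℝ α y) w₂)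
        (((fderiv ℝ α u).comp (0 : (Fin n → ℝ) →L[ℝ] (Fin n → ℝ)))
          + (fderiv ℝ (fderiv ℝ α) u).flip w₂) u :=
      ((hαd1 u).hasFDerivAt).clm_apply (hasFDerivAt_const w₂ u)
    have hF : HasFDerivAt (fun y => (fderiv ℝ α y w₂) (x y))
        (((fderiv ℝ α u w₂).comp (fderiv ℝ x u))
          + ((((fderiv ℝ α u).comp (0 : (Fin n → ℝ) →L[ℝ] (Fin n → ℝ)))
          + (fderiv ℝ (fderiv ℝ α) u).flip w₂)).flip (x u)) u :=
      hc.clm_apply ((hxd u).hasFDerivAt)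
    have hF0 : HasFDerivAt (fun y => (fderiv ℝ α y w₂) (x y)) (0 : (Fin n → ℝ) →L[ℝ] ℝ) u := by
      have : (fun y => (fderiv ℝ α y w₂) (x y)) = fun _ => (0 : ℝ) := by
        funext y; exact htanS' y w₂
      rw [this]; exact hasFDerivAt_const 0 u
    have := hF.unique hF0
    have h := congrFun (congrArg DFunLike.coe this) w₁
    simp at h
    linarith
  have hsymm : ∀ u w₁ w₂ : Fin n → ℝ,
      fderiv ℝ (fderiv ℝ α) u w₁ w₂ = fderiv ℝ (fderiv ℝ α) u w₂ w₁ := by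
    intro u w₁ w₂
    exact (hα.contDiffAt.isSymmSndFDerivAt (by norm_num)) w₁ w₂
  intro u w₁ w₂
  have c1 := claim1 u w₁ w₂
  have c2 := claim2 u w₂ w₁
  have c2' := claim2 u w₁ w₂
  have hs := hsymm u w₁ w₂
  have hs' : (fderiv ℝ (fderiv ℝ α) u w₁ w₂) (x u) = (fderiv ℝ (fderiv ℝ α) u w₂ w₁) (x u) := by
    rw [hs]
  refine ⟨by linarith, by linarith, by linarith⟩
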